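/- Let K be a commutative ring, n ≥ 1, and a : Fin n → K × K. For I ⊆ {1,…,n} define x(I) = ∏_{i∈I} (a_i)₂ · ∏_{i∉I} (a_i)₁. Then for every nonempty I ⊆ {1,…,n} and every set partition π of I, x(∅)^{n−|π|} · ∏_{B∈π} x(B) = ∏_{i∉I} (a_i)₁ⁿ · ∏_{i∈I} ((a_i)₁^{n−1}·(a_i)₂); in particular this product is independent of the partition π. -/

import Mathlib

/-- Let `K` be a commutative ring, `n ≥ 1`, `a : Fin n → K × K`, and for
`I ⊆ [n]` let `x(I) = ∏_{i∈I} (a i).2 · ∏_{i∉I} (a i).1`.  Then for every nonempty `I` and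
every set partition `π` of `I`,
`x(∅)^{n−|π|} · ∏_{B∈π} x(B) = ∏_{i∉I} (a i).1ⁿ · ∏_{i∈I} ((a i).1^{n−1}·(a i).2)`;
in particular this product does not depend on `π`. -/
theorem segre_partition_product_independent {K : Type*} [CommRing K] {n : ℕ} (hn : 1 ≤ n)
    (a : Fin n → K × K)
    (x : Finset (Fin n) → K)
    (hx : ∀ I : Finset (Fin n), x I = (∏ i ∈ I, (a i).2) * ∏ i ∈ Iᶜ, (a i).1) :
    ∀ I : Finset (Fin n), I.Nonempty → ∀ π : Finpartition I,
      x ∅ ^ (n - π.parts.card) * ∏ B ∈ π.parts, x B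
        = (∏ i ∈ Iᶜ, (a i).1 ^ n) * ∏ i ∈ I, ((a i).1 ^ (n - 1) * (a i).2) := by
  intro I hI π
  set k := π.parts.card with hk
  have hk1 : 1 ≤ k := Finset.card_pos.2 (π.parts_nonempty hI.ne_empty)
  have hkn : k ≤ n := le_trans π.card_parts_le_card (by simpa using I.card_le_univ)
  -- x ∅ = ∏ over everything of (a i).1
  have hxe : x ∅ = ∏ i : Fin n, (a i).1 := by
    rw [hx]; simp
  -- product over blocks of the "second coordinate" part
  have h2 : ∏ B ∈ π.parts, ∏ i ∈ B, (a i).2 = ∏ i ∈ I, (a i).2 := by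
    conv_rhs => rw [← π.biUnion_parts]
    rw [Finset.prod_biUnion π.supIndep.pairwiseDisjoint]
    rfl
  -- product over blocks of the complement part
  have hcount : ∀ i : Fin n,
      (π.parts.filter (fun B => i ∉ B)).card = if i ∈ I then k - 1 else k := by
    intro i
    by_cases hi : i ∈ I
    · have h1 : (π.parts.filter (fun B => i ∈ B)) = {π.part i} := by
        ext B
        simp only [Finset.mem_filter, Finset.mem_singleton]
        constructor
        · rintro ⟨hB, hiB⟩
          exact π.eq_of_mem_parts hB (π.part_mem.2 hi) hiB (π.mem_part hi)
        · rintro rfl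
          exact ⟨π.part_mem.2 hi, π.mem_part hi⟩
      have := Finset.card_filter_add_card_filter_not
        (s := π.parts) (p := fun B => i ∈ B)
      simp only [h1, Finset.card_singleton] at this
      simp only [hi, if_true]
      omega
    · have h0 : (π.parts.filter (fun B => i ∉ B)) = π.parts := by
        apply Finset.filter_true_of_mem
        intro B hB hiB
        exact hi (π.le hB hiB)
      simp [hi, h0, hk]
  have h1 : ∏ B ∈ π.parts, ∏ i ∈ Bᶜ, (a i).1
      = (∏ i ∈ I, (a i).1 ^ (k - 1)) * ∏ i ∈ Iᶜ, (a i).1 ^ k := by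
    have swap : ∏ B ∈ π.parts, ∏ i ∈ Bᶜ, (a i).1
        = ∏ i : Fin n, ∏ B ∈ π.parts.filter (fun B => i ∉ B), (a i).1 := by
      rw [Finset.prod_comm' (t' := Finset.univ)
        (s' := fun i => π.parts.filter (fun B => i ∉ B))]
      intro B i
      simp [and_comm]
    rw [swap]
    have : ∀ i : Fin n, ∏ B ∈ π.parts.filter (fun B => i ∉ B), (a i).1
        = (a i).1 ^ (if i ∈ I then k - 1 else k) := by
      intro i
      rw [Finset.prod_const, hcount i]
    rw [Finset.prod_congr rfl (fun i _ => this i), ← Finset.prod_mul_prod_compl I]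
    congr 1
    · exact Finset.prod_congr rfl (fun i hi => by rw [if_pos hi])
    · exact Finset.prod_congr rfl (fun i hi => by
        rw [if_neg (Finset.mem_compl.1 hi)])
  -- put everything together
  have hxpow : x ∅ ^ (n - k) = (∏ i ∈ I, (a i).1 ^ (n - k)) *
      ∏ i ∈ Iᶜ, (a i).1 ^ (n - k) := by
    rw [hxe, ← Finset.prod_pow, ← Finset.prod_mul_prod_compl I]
  calc x ∅ ^ (n - k) * ∏ B ∈ π.parts, x B
      = x ∅ ^ (n - k) * ((∏ i ∈ I, (a i).2) *
          (((∏ i ∈ I, (a i).1 ^ (k - 1)) * ∏ i ∈ Iᶜ, (a i).1 ^ k))) := by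
        rw [Finset.prod_congr rfl (fun B _ => hx B), Finset.prod_mul_distrib, h2, h1]
    _ = ((∏ i ∈ I, (a i).1 ^ (n - k)) * (∏ i ∈ I, (a i).1 ^ (k - 1)) *
          ∏ i ∈ I, (a i).2) *
        ((∏ i ∈ Iᶜ, (a i).1 ^ (n - k)) * ∏ i ∈ Iᶜ, (a i).1 ^ k) := by
        rw [hxpow]; ring
    _ = (∏ i ∈ Iᶜ, (a i).1 ^ n) * ∏ i ∈ I, ((a i).1 ^ (n - 1) * (a i).2) := by
        rw [← Finset.prod_mul_distrib, ← Finset.prod_mul_distrib,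
          ← Finset.prod_mul_distrib]
        rw [mul_comm]
        congr 1
        · exact Finset.prod_congr rfl (fun i _ => by
            rw [← pow_add]; congr 1; omega)
        · exact Finset.prod_congr rfl (fun i _ => by
            rw [← pow_add]; congr 2; omega)
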